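/- Fix $c > 1$ and define $G(u,v;c) = 4c\, g(u,v;c) g(v,u;c) g(1-u,1-v;c) g(1-v,1-u;c)$ where $g(x,y;c) = \left(\frac{2cx+(y-x)-\sqrt{(y-x)^2+4cxy}}{x(c-1)}\right)^{-x}$. Then $G(u,v;c)$ is strictly increasing in $u$ and strictly decreasing in $v$ on the region $0 < u < v < 1$. In particular, for $u \ne v$ in $(0,1)$, $G(u,v;c) < (\sqrt{c}+1)^2$. -/

import Mathlib

noncomputable def gLD (x y c : ℝ) : ℝ :=
  ((2 * c * x + (y - x) - Real.sqrt ((y - x) ^ 2 + 4 * c * x * y)) / (x * (c - 1))) ^ (-x)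

noncomputable def GLD (u v c : ℝ) : ℝ :=
  4 * c * gLD u v c * gLD v u c * gLD (1 - u) (1 - v) c * gLD (1 - v) (1 - u) c

noncomputable def sQ (c x y : ℝ) : ℝ := Real.sqrt ((y - x) ^ 2 + 4 * c * x * y)

noncomputable def aA (c x y : ℝ) : ℝ := (2 * c * x + (y - x) - sQ c x y) / (x * (c - 1))

noncomputable def lA (c x y : ℝ) : ℝ := Real.log (aA c x y)

lemma sQ_sq {c x y : ℝ} (hc : 1 < c) (hx : 0 < x) (hy : 0 < y) :
    (sQ c x y) ^ 2 = (y - x) ^ 2 + 4 * c * x * y := by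
  have h : (0:ℝ) ≤ (y - x) ^ 2 + 4 * c * x * y := by nlinarith [sq_nonneg (y-x), mul_pos hx hy]
  exact Real.sq_sqrt h

lemma sQ_pos {c x y : ℝ} (hc : 1 < c) (hx : 0 < x) (hy : 0 < y) : 0 < sQ c x y := by
  apply Real.sqrt_pos.2; nlinarith [sq_nonneg (y-x), mul_pos hx hy]

lemma sQ_symm (c x y : ℝ) : sQ c x y = sQ c y x := by unfold sQ; ring_nf

lemma num_pos {c x y : ℝ} (hc : 1 < c) (hx : 0 < x) (hy : 0 < y) :
    0 < 2 * c * x + (y - x) - sQ c x y := by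
  have hs := sQ_sq hc hx hy
  have hsn : 0 ≤ sQ c x y := Real.sqrt_nonneg _
  have hb : 0 < 2 * c * x + (y - x) := by nlinarith
  have h2 : sQ c x y ^ 2 < (2 * c * x + (y - x)) ^ 2 := by
    nlinarith [mul_pos (mul_pos hx hx) (show (0:ℝ) < c - 1 by linarith), mul_pos hx hx]
  have := lt_of_pow_lt_pow_left₀ 2 hb.le h2
  linarith

lemma aA_pos {c x y : ℝ} (hc : 1 < c) (hx : 0 < x) (hy : 0 < y) : 0 < aA c x y :=
  div_pos (num_pos hc hx hy) (mul_pos hx (by linarith : (0:ℝ) < c - 1))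

lemma aA_alt {c x y : ℝ} (hc : 1 < c) (hx : 0 < x) (hy : 0 < y) :
    aA c x y = 4 * c * x / (2 * c * x + (y - x) + sQ c x y) := by
  have hs := sQ_sq hc hx hy
  have hsp := sQ_pos hc hx hy
  have hd : 0 < 2 * c * x + (y - x) + sQ c x y := by
    have := num_pos hc hx hy; linarith
  rw [aA, div_eq_div_iff (mul_pos hx (by linarith : (0:ℝ) < c - 1)).ne' hd.ne']
  nlinarith [hs]

lemma gLD_eq {c x y : ℝ} (hc : 1 < c) (hx : 0 < x) (hy : 0 < y) :
    gLD x y c = Real.exp (-x * lA c x y) := by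
  have h : gLD x y c = (aA c x y) ^ (-x) := rfl
  rw [h, Real.rpow_def_of_pos (aA_pos hc hx hy), lA]
  ring_nf
lemma keyA {c x y : ℝ} (hc : 1 < c) (hx : 0 < x) (hxy : x < y) (hy1 : y < 1) :
    aA c x y < aA c (1 - x) (1 - y) := by
  have hy : 0 < y := hx.trans hxy
  have hx1 : 0 < 1 - x := by linarith
  have hy1' : 0 < 1 - y := by linarith
  have hs2 := sQ_sq hc hx hy
  have hs'2 := sQ_sq hc hx1 hy1'
  have hsn : 0 ≤ sQ c x y := Real.sqrt_nonneg _
  have hs'n : 0 ≤ sQ c (1-x) (1-y) := Real.sqrt_nonneg _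
  set s := sQ c x y with hs_def
  set s' := sQ c (1-x) (1-y) with hs'_def
  have hd : 0 < y - x := by linarith
  have hsd : y - x < s := by
    refine lt_of_pow_lt_pow_left₀ 2 hsn ?_
    nlinarith [mul_pos hx hy]
  have hrpos : 0 < (y - x) + (1 - x) * s := by nlinarith
  have key1 : x * s' < (y - x) + (1 - x) * s := by
    refine lt_of_pow_lt_pow_left₀ 2 hrpos.le ?_
    have h1 : 4*c*x*(1-x)*(x*(1-y)) < 4*c*x*(1-x)*(y*(1-x)) := by
      have : x*(1-y) < y*(1-x) := by nlinarith
      have hpos : 0 < 4*c*x*(1-x) := by positivity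
      exact mul_lt_mul_of_pos_left this hpos
    have h2 : 2*(y-x)*(1-x)*(y-x) ≤ 2*(y-x)*(1-x)*s := by
      have hpos : 0 < 2*(y-x)*(1-x) := by positivity
      exact mul_le_mul_of_nonneg_left hsd.le hpos.le
    have hs'2x : (x*s')^2 = x^2*((x-y)^2 + 4*c*(1-x)*(1-y)) := by linear_combination x^2 * hs'2
    have hsb : ((1-x)*s)^2 = (1-x)^2*((y-x)^2+4*c*x*y) := by linear_combination (1-x)^2 * hs2
    nlinarith [hs'2x, hsb, h1, h2,
      mul_nonneg (by nlinarith : (0:ℝ) ≤ 4*(1-x)) (sq_nonneg (y-x))]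
  rw [aA_alt hc hx hy, aA_alt hc hx1 hy1']
  rw [div_lt_div_iff₀ (by nlinarith : (0:ℝ) < 2*c*x + (y-x) + s)
      (by nlinarith [num_pos hc hx1 hy1'] : (0:ℝ) < 2*c*(1-x) + ((1-y)-(1-x)) + s')]
  nlinarith [mul_pos hx (hx.trans hxy), hc, key1]
noncomputable def Fc (c x y : ℝ) : ℝ := -(x * lA c x y) - y * lA c y x

noncomputable def lnG (c u v : ℝ) : ℝ := Real.log (4 * c) + Fc c u v + Fc c (1 - u) (1 - v)

lemma GLD_eq {c u v : ℝ} (hc : 1 < c) (hu : 0 < u) (hu1 : u < 1) (hv : 0 < v) (hv1 : v < 1) :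
    GLD u v c = Real.exp (lnG c u v) := by
  have h1 : 0 < 1 - u := by linarith
  have h2 : 0 < 1 - v := by linarith
  rw [GLD, gLD_eq hc hu hv, gLD_eq hc hv hu, gLD_eq hc h1 h2, gLD_eq hc h2 h1]
  rw [show (4:ℝ) * c = Real.exp (Real.log (4*c)) from
    (Real.exp_log (by linarith : (0:ℝ) < 4*c)).symm]
  rw [← Real.exp_add, ← Real.exp_add, ← Real.exp_add, ← Real.exp_add]
  congr 1
  rw [lnG, Fc, Fc]; ring

lemma GLD_diag {c u : ℝ} (hc : 1 < c) (hu : 0 < u) (hu1 : u < 1) :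
    GLD u u c = (Real.sqrt c + 1) ^ 2 := by
  have hc0 : (0:ℝ) < c := by linarith
  have hsc : 0 < Real.sqrt c := Real.sqrt_pos.2 hc0
  have hsc2 : Real.sqrt c ^ 2 = c := Real.sq_sqrt hc0.le
  have hsc1 : 1 < Real.sqrt c := by
    nlinarith [hsc2, hsc]
  have key : ∀ x : ℝ, 0 < x →
      (2 * c * x + (x - x) - Real.sqrt ((x - x) ^ 2 + 4 * c * x * x)) / (x * (c - 1))
        = 2 * Real.sqrt c / (Real.sqrt c + 1) := by
    intro x hx
    have hsq : Real.sqrt ((x - x) ^ 2 + 4 * c * x * x) = 2 * x * Real.sqrt c := by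
      rw [show (x - x) ^ 2 + 4 * c * x * x = (2 * x * Real.sqrt c)^2 by nlinarith [hsc2]]
      exact Real.sqrt_sq (by positivity)
    rw [hsq, div_eq_div_iff (by nlinarith : (0:ℝ) < x * (c-1)).ne' (by positivity : (0:ℝ) < Real.sqrt c + 1).ne']
    nlinarith [hsc2, hsc]
  have h1 : 0 < 1 - u := by linarith
  set B := 2 * Real.sqrt c / (Real.sqrt c + 1) with hB
  have hBpos : 0 < B := by positivity
  have g1 : gLD u u c = B ^ (-u) := by rw [gLD, key u hu]
  have g2 : gLD (1-u) (1-u) c = B ^ (-(1-u)) := by rw [gLD, key (1-u) h1]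
  rw [GLD, g1, g2]
  rw [show 4*c*B^(-u)*B^(-u)*B^(-(1-u))*B^(-(1-u))
      = 4*c*(B^(-u)*(B^(-u)*(B^(-(1-u))*B^(-(1-u))))) by ring]
  rw [← Real.rpow_add hBpos, ← Real.rpow_add hBpos, ← Real.rpow_add hBpos]
  rw [show -(1-u) + -(1-u) = -(1-u) + -(1-u) from rfl]
  rw [show -u + (-u + (-(1-u) + -(1-u))) = (-2 : ℝ) by ring]
  rw [show (-2 : ℝ) = ((-2 : ℤ) : ℝ) by norm_num, Real.rpow_intCast, zpow_neg]
  have hB2 : B ^ (2:ℤ) = 4 * c / (Real.sqrt c + 1)^2 := by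
    rw [hB]; rw [zpow_two]
    field_simp
    nlinarith [hsc2]
  rw [hB2]
  field_simp
lemma hasDerivAt_Fc {c y x : ℝ} (hc : 1 < c) (hy : 0 < y) (hx : 0 < x) :
    HasDerivAt (fun t => Fc c t y) (-(lA c x y)) x := by
  have hcm : (0:ℝ) < c - 1 := by linarith
  have hE : (0:ℝ) < (y - x)^2 + 4*c*x*y := by nlinarith [mul_pos hx hy, sq_nonneg (y-x)]
  have hE2 : (0:ℝ) < (x - y)^2 + 4*c*y*x := by nlinarith [mul_pos hx hy, sq_nonneg (y-x)]
  set S : ℝ := Real.sqrt ((y - x) ^ 2 + 4 * c * x * y) with hS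
  set S2 : ℝ := Real.sqrt ((x - y) ^ 2 + 4 * c * y * x) with hS2
  have hSS : S2 = S := by rw [hS, hS2]; congr 1; ring
  have hSpos : 0 < S := Real.sqrt_pos.2 hE
  have hs2 : S ^ 2 = (y - x)^2 + 4*c*x*y := Real.sq_sqrt hE.le
  have hN1 : 0 < 2*c*x + (y - x) - S := num_pos hc hx hy
  have hN2 : 0 < 2*c*y + (x - y) - S := by
    have h := num_pos hc hy hx
    rw [show sQ c y x = S2 from rfl, hSS] at h
    exact h
  have a1 : HasDerivAt (fun t : ℝ => y - t) (-1) x := by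
    simpa using (hasDerivAt_id x).const_sub y
  have a4 : HasDerivAt (fun t : ℝ => t - y) 1 x := (hasDerivAt_id x).sub_const y
  have d1 : HasDerivAt (fun t : ℝ => (y - t)^2 + 4*c*t*y) (4*c*y - 2*(y-x)) x := by
    have a3 : HasDerivAt (fun t : ℝ => 4*c*t*y) (4*c*y) x := by
      simpa using ((hasDerivAt_id x).const_mul (4*c)).mul_const y
    refine ((a1.pow 2).add a3).congr_deriv ?_
    norm_num; ring
  have dsq : HasDerivAt (fun t : ℝ => Real.sqrt ((y - t)^2 + 4*c*t*y))
      ((4*c*y - 2*(y-x))/(2*S)) x := by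
    have := d1.sqrt hE.ne'
    convert this using 2
  have dN1 : HasDerivAt (fun t : ℝ => 2*c*t + (y - t) - Real.sqrt ((y - t)^2 + 4*c*t*y))
      (2*c + (-1) - (4*c*y - 2*(y-x))/(2*S)) x := by
    have a0 : HasDerivAt (fun t : ℝ => 2*c*t) (2*c) x := by
      simpa using (hasDerivAt_id x).const_mul (2*c)
    exact (a0.add a1).sub dsq
  have dden : HasDerivAt (fun t : ℝ => t*(c-1)) (c-1) x := by
    simpa using (hasDerivAt_id x).mul_const (c-1)
  have dq := dN1.div dden (mul_pos hx hcm).ne'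
  have hqpos : (0:ℝ) < (2*c*x + (y - x) - S)/(x*(c-1)) := div_pos hN1 (mul_pos hx hcm)
  have dlog1 := dq.log (by simpa using hqpos.ne')
  have dterm1 := (hasDerivAt_id x).mul dlog1
  -- second term
  have d2 : HasDerivAt (fun t : ℝ => (t - y)^2 + 4*c*y*t) (2*(x-y) + 4*c*y) x := by
    have a5 : HasDerivAt (fun t : ℝ => 4*c*y*t) (4*c*y) x := by
      simpa using (hasDerivAt_id x).const_mul (4*c*y)
    refine ((a4.pow 2).add a5).congr_deriv ?_
    norm_num
  have dsq2 : HasDerivAt (fun t : ℝ => Real.sqrt ((t - y)^2 + 4*c*y*t))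
      ((2*(x-y) + 4*c*y)/(2*S2)) x := by
    have := d2.sqrt hE2.ne'
    convert this using 2
  have dN2 : HasDerivAt (fun t : ℝ => 2*c*y + (t - y) - Real.sqrt ((t - y)^2 + 4*c*y*t))
      (0 + 1 - (2*(x-y) + 4*c*y)/(2*S2)) x :=
    ((hasDerivAt_const x (2*c*y)).add a4).sub dsq2
  have dq2 := dN2.div_const (y*(c-1))
  have hq2pos : (0:ℝ) < (2*c*y + (x - y) - S2)/(y*(c-1)) := by
    rw [hSS]; exact div_pos hN2 (mul_pos hy hcm)
  have dlog2 := dq2.log (by simpa using hq2pos.ne')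
  have dterm2 := dlog2.const_mul y
  have dF := dterm1.neg.sub dterm2
  refine dF.congr_deriv (Eq.symm ?_)
  simp only [lA, aA, sQ, id_eq, Pi.div_apply]
  simp only [← hS, ← hS2, hSS]
  have h1 : (2*c*x + (y - x) - S) ≠ 0 := hN1.ne'
  have h2 : (2*c*y + (x - y) - S) ≠ 0 := hN2.ne'
  field_simp
  linear_combination (2*(2*c*y + (x - y) - S)) * hs2
lemma hasDerivAt_lnG_u {c v x : ℝ} (hc : 1 < c) (hv : 0 < v) (hv1 : v < 1)
    (hx : 0 < x) (hx1 : x < 1) :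
    HasDerivAt (fun u => lnG c u v) (lA c (1-x) (1-v) - lA c x v) x := by
  have h1 := hasDerivAt_Fc hc hv hx
  have hv' : (0:ℝ) < 1 - v := by linarith
  have hx' : (0:ℝ) < 1 - x := by linarith
  have hinner : HasDerivAt (fun u : ℝ => 1 - u) (-1) x := by
    simpa using (hasDerivAt_id x).const_sub 1
  have houter := hasDerivAt_Fc hc hv' hx'
  have h2 := HasDerivAt.comp x houter hinner
  have h3 := ((hasDerivAt_const x (Real.log (4*c))).add h1).add h2
  have : HasDerivAt (fun u => lnG c u v)
      (0 + -(lA c x v) + -(lA c (1-x) (1-v)) * (-1)) x := h3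
  convert this using 1
  ring

lemma hasDerivAt_lnG_v {c u x : ℝ} (hc : 1 < c) (hu : 0 < u) (hu1 : u < 1)
    (hx : 0 < x) (hx1 : x < 1) :
    HasDerivAt (fun v => lnG c u v) (lA c (1-x) (1-u) - lA c x u) x := by
  have hu' : (0:ℝ) < 1 - u := by linarith
  have hx' : (0:ℝ) < 1 - x := by linarith
  have h1 : HasDerivAt (fun v => Fc c u v) (-(lA c x u)) x := by
    have h := hasDerivAt_Fc hc hu hx
    have heq : (fun v => Fc c u v) = (fun t => Fc c t u) := by
      funext w; simp only [Fc]; ring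
    rw [heq]; exact h
  have hinner : HasDerivAt (fun v : ℝ => 1 - v) (-1) x := by
    simpa using (hasDerivAt_id x).const_sub 1
  have houter := hasDerivAt_Fc hc hu' hx'
  have h2' : HasDerivAt (fun v => Fc c (1-u) (1-v)) (-(lA c (1-x) (1-u)) * (-1)) x := by
    have heq : (fun v => Fc c (1-u) (1-v)) = (fun v => Fc c (1-v) (1-u)) := by
      funext w; simp only [Fc]; ring
    rw [heq]
    exact HasDerivAt.comp x houter hinner
  have h3 := ((hasDerivAt_const x (Real.log (4*c))).add h1).add h2'
  have : HasDerivAt (fun v => lnG c u v)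
      (0 + -(lA c x u) + -(lA c (1-x) (1-u)) * (-1)) x := h3
  convert this using 1
  ring

lemma lnG_mono_u {c v : ℝ} (hc : 1 < c) (hv1 : v < 1) :
    ∀ u₁ u₂ : ℝ, 0 < u₁ → u₁ < u₂ → u₂ < v → lnG c u₁ v < lnG c u₂ v := by
  intro u₁ u₂ hu₁ h12 h2v
  have hv : 0 < v := by linarith
  have key : StrictMonoOn (fun u => lnG c u v) (Set.Icc u₁ u₂) := by
    apply strictMonoOn_of_hasDerivWithinAt_pos (convex_Icc u₁ u₂)
      (f' := fun x => lA c (1-x) (1-v) - lA c x v)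
    · intro x hx
      obtain ⟨ha, hb⟩ := hx
      exact ((hasDerivAt_lnG_u hc hv hv1 (by linarith) (by linarith)).continuousAt).continuousWithinAt
    · intro x hx
      rw [interior_Icc] at hx
      obtain ⟨ha, hb⟩ := hx
      exact ((hasDerivAt_lnG_u hc hv hv1 (by linarith) (by linarith))).hasDerivWithinAt
    · intro x hx
      rw [interior_Icc] at hx
      obtain ⟨ha, hb⟩ := hx
      have hxpos : 0 < x := by linarith
      have hxv : x < v := by linarith
      have hkey := keyA hc hxpos hxv hv1
      have := Real.log_lt_log (aA_pos hc hxpos hv) hkey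
      simp only [lA]
      linarith
  exact key (Set.left_mem_Icc.2 h12.le) (Set.right_mem_Icc.2 h12.le) h12

lemma lnG_anti_v {c u : ℝ} (hc : 1 < c) (hu : 0 < u) (hu1 : u < 1) :
    ∀ a b : ℝ, u ≤ a → a < b → b < 1 → lnG c u b < lnG c u a := by
  intro a b hua hab hb1
  have key : StrictAntiOn (fun w => lnG c u w) (Set.Icc a b) := by
    apply strictAntiOn_of_hasDerivWithinAt_neg (convex_Icc a b)
      (f' := fun x => lA c (1-x) (1-u) - lA c x u)
    · intro x hx
      obtain ⟨ha, hb⟩ := hx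
      exact ((hasDerivAt_lnG_v hc hu hu1 (by linarith) (by linarith)).continuousAt).continuousWithinAt
    · intro x hx
      rw [interior_Icc] at hx
      obtain ⟨ha, hb⟩ := hx
      exact ((hasDerivAt_lnG_v hc hu hu1 (by linarith) (by linarith))).hasDerivWithinAt
    · intro x hx
      rw [interior_Icc] at hx
      obtain ⟨ha, hb⟩ := hx
      have hx1 : (0:ℝ) < 1 - x := by linarith
      have hxx : (1:ℝ) - x < 1 - u := by linarith
      have h1u : (1:ℝ) - u < 1 := by linarith
      have hkey := keyA hc hx1 hxx h1u
      rw [show (1:ℝ) - (1 - x) = x by ring, show (1:ℝ) - (1 - u) = u by ring] at hkey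
      have hxpos : 0 < x := by linarith
      have := Real.log_lt_log (aA_pos hc hx1 (by linarith : (0:ℝ) < 1 - u)) hkey
      simp only [lA]
      linarith
  exact key (Set.left_mem_Icc.2 hab.le) (Set.right_mem_Icc.2 hab.le) hab

theorem GLD_monotone (c : ℝ) (hc : 1 < c) :
    (∀ u₁ u₂ v : ℝ, 0 < u₁ → u₁ < u₂ → u₂ < v → v < 1 → GLD u₁ v c < GLD u₂ v c) ∧
    (∀ u v₁ v₂ : ℝ, 0 < u → u < v₁ → v₁ < v₂ → v₂ < 1 → GLD u v₂ c < GLD u v₁ c) ∧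
    (∀ u v : ℝ, u ∈ Set.Ioo (0:ℝ) 1 → v ∈ Set.Ioo (0:ℝ) 1 → u ≠ v →
      GLD u v c < (Real.sqrt c + 1) ^ 2) := by
  have symm : ∀ u v : ℝ, GLD u v c = GLD v u c := by
    intro u v; unfold GLD; ring
  have part3 : ∀ u v : ℝ, 0 < u → u < v → v < 1 → GLD u v c < (Real.sqrt c + 1) ^ 2 := by
    intro u v hu huv hv1
    have h := lnG_anti_v hc hu (by linarith : u < 1) u v le_rfl huv hv1
    have e1 := GLD_eq hc hu (by linarith : u < 1) (by linarith : 0 < v) hv1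
    have e2 := GLD_eq hc hu (by linarith : u < 1) hu (by linarith : u < 1)
    rw [← GLD_diag hc hu (by linarith : u < 1), e1, e2]
    exact Real.exp_lt_exp.2 h
  refine ⟨?_, ?_, ?_⟩
  · intro u₁ u₂ v hu₁ h12 h2v hv1
    have e1 := GLD_eq hc hu₁ (by linarith) (by linarith : 0 < v) hv1
    have e2 := GLD_eq hc (by linarith : 0 < u₂) (by linarith) (by linarith : 0 < v) hv1
    rw [e1, e2]
    exact Real.exp_lt_exp.2 (lnG_mono_u hc hv1 u₁ u₂ hu₁ h12 h2v)
  · intro u v₁ v₂ hu h1 h12 h2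
    have e1 := GLD_eq hc hu (by linarith) (by linarith : 0 < v₂) h2
    have e2 := GLD_eq hc hu (by linarith) (by linarith : 0 < v₁) (by linarith)
    rw [e1, e2]
    exact Real.exp_lt_exp.2 (lnG_anti_v hc hu (by linarith) v₁ v₂ h1.le h12 h2)
  · intro u v hu hv huv
    rcases lt_or_gt_of_ne huv with h | h
    · exact part3 u v hu.1 h hv.2
    · rw [symm]
      exact part3 v u hv.1 h hu.2
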